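/- arXiv:math/0501418 — 2 statements merged into one kernel-verified Lean document; each statement's English description precedes it below -/
import Mathlib

section
/- Let A and B be lattices and suppose A ⊠ B is nonempty. Then A ⊠ B is an ideal of the lattice A □ B: it is nonempty; if H ∈ A ⊠ B, K ∈ A □ B and K ⊆ H, then K ∈ A ⊠ B; and if H, K ∈ A ⊠ B, then their join BoxCl(H ∪ K) in A □ B belongs to A ⊠ B. In particular, A ⊠ B is a lattice under set inclusion. -/
/-- The pure box `a □ b = {⟨x,y⟩ : x ≤ a or y ≤ b}`. -/
def pureBox {A B : Type*} [Lattice A] [Lattice B] (a : A) (b : B) : Set (A × B) :=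
  {p : A × B | p.1 ≤ a ∨ p.2 ≤ b}

/-- `a ∘ b = {⟨x,y⟩ : x ≤ a and y ≤ b}`. -/
def pureCirc {A B : Type*} [Lattice A] [Lattice B] (a : A) (b : B) : Set (A × B) :=
  {p : A × B | p.1 ≤ a ∧ p.2 ≤ b}

/-- The box product `A □ B`: all finite (nonempty) intersections of pure boxes. -/
def BoxProd (A B : Type*) [Lattice A] [Lattice B] : Set (Set (A × B)) :=
  {H | ∃ (n : ℕ) (a : Fin (n + 1) → A) (b : Fin (n + 1) → B),
    H = ⋂ i, pureBox (a i) (b i)}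

/-- `A ⊡ B`: all finite unions of pure boxes (at least one) and pure circles. -/
def BoxDot (A B : Type*) [Lattice A] [Lattice B] : Set (Set (A × B)) :=
  {H | ∃ (m n : ℕ) (a : Fin (m + 1) → A) (b : Fin (m + 1) → B)
      (c : Fin n → A) (d : Fin n → B),
    H = (⋃ i, pureBox (a i) (b i)) ∪ ⋃ j, pureCirc (c j) (d j)}

/-- The box closure of a subset of `A × B`: intersection of all pure boxes containing it. -/
def BoxCl {A B : Type*} [Lattice A] [Lattice B] (X : Set (A × B)) : Set (A × B) :=
  ⋂ (a : A) (b : B) (_ : X ⊆ pureBox a b), pureBox a b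

/-- The pure lattice tensor `a ⊠ b = (a ∘ b) ∪ ⊥_{A,B}`, where `⊥_{A,B}` consists of
the pairs one of whose coordinates is a least element. -/
def pureTens {A B : Type*} [Lattice A] [Lattice B] (a : A) (b : B) : Set (A × B) :=
  pureCirc a b ∪ {p : A × B | IsBot p.1 ∨ IsBot p.2}

/-- A subset of `A × B` is confined if it is contained in some pure lattice tensor. -/
def Confined {A B : Type*} [Lattice A] [Lattice B] (X : Set (A × B)) : Prop :=
  ∃ (a : A) (b : B), X ⊆ pureTens a b

/-- The lattice tensor product `A ⊠ B`: all confined elements of `A □ B`. -/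
def LatTens (A B : Type*) [Lattice A] [Lattice B] : Set (Set (A × B)) :=
  {H | H ∈ BoxProd A B ∧ Confined H}

/-- `X^△ = {⟨a,b⟩ : ⟨x,y⟩ ◁ ⟨a,b⟩ for all ⟨x,y⟩ ∈ X}` where `⟨x,y⟩ ◁ ⟨a,b⟩` iff
`x ≤ a` or `y ≤ b`. -/
def trUp {A B : Type*} [Lattice A] [Lattice B] (X : Set (A × B)) : Set (A × B) :=
  {p : A × B | ∀ q ∈ X, q.1 ≤ p.1 ∨ q.2 ≤ p.2}

/-- `X^▽ = {⟨a,b⟩ : ⟨a,b⟩ ◁ ⟨x,y⟩ for all ⟨x,y⟩ ∈ X}`. -/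
def trDown {A B : Type*} [Lattice A] [Lattice B] (X : Set (A × B)) : Set (A × B) :=
  {p : A × B | ∀ q ∈ X, p.1 ≤ q.1 ∨ p.2 ≤ q.2}

section Aux
variable {A B : Type*} [Lattice A] [Lattice B]

lemma mem_pureBox {a : A} {b : B} {p : A × B} : p ∈ pureBox a b ↔ p.1 ≤ a ∨ p.2 ≤ b := Iff.rfl

lemma mem_pureTens {a : A} {b : B} {p : A × B} :
    p ∈ pureTens a b ↔ (p.1 ≤ a ∧ p.2 ≤ b) ∨ (IsBot p.1 ∨ IsBot p.2) := by
  simp [pureTens, pureCirc, Set.mem_union, Set.mem_setOf_eq]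

lemma mem_boxCl {X : Set (A × B)} {p : A × B} :
    p ∈ BoxCl X ↔ ∀ a b, X ⊆ pureBox a b → p ∈ pureBox a b := by
  simp [BoxCl, Set.mem_iInter]

lemma boxCl_subset_pureBox {X : Set (A × B)} {a : A} {b : B} (h : X ⊆ pureBox a b) :
    BoxCl X ⊆ pureBox a b := fun _ hp => mem_boxCl.mp hp _ _ h

lemma pureBox_mem_boxProd (a : A) (b : B) : pureBox a b ∈ BoxProd A B :=
  ⟨0, fun _ => a, fun _ => b, by rw [Set.iInter_const]⟩

lemma inter_mem_boxProd {H K : Set (A × B)} (hH : H ∈ BoxProd A B) (hK : K ∈ BoxProd A B) :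
    H ∩ K ∈ BoxProd A B := by
  obtain ⟨n, a, b, rfl⟩ := hH
  obtain ⟨m, c, d, rfl⟩ := hK
  refine ⟨n + 1 + m, Fin.append (n := m+1) a c, Fin.append (n := m+1) b d, ?_⟩
  ext p
  simp only [Set.mem_inter_iff, Set.mem_iInter]
  constructor
  · rintro ⟨h1, h2⟩ i
    refine Fin.addCases (motive := fun i =>
        p ∈ pureBox (Fin.append a c i) (Fin.append b d i)) (fun i => ?_) (fun j => ?_) i
    · simpa [Fin.append_left] using h1 i
    · simpa [Fin.append_right] using h2 j
  · intro h
    constructor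
    · intro i
      simpa [Fin.append_left] using h (Fin.castAdd (m + 1) i)
    · intro j
      simpa [Fin.append_right] using h (Fin.natAdd (n + 1) j)

lemma finsetInter_mem_boxProd {ι : Type*} (s : Finset ι) (hs : s.Nonempty)
    (f : ι → A) (g : ι → B) :
    (⋂ i ∈ s, pureBox (f i) (g i)) ∈ BoxProd A B := by
  classical
  induction hs using Finset.Nonempty.cons_induction
  next x => simpa using pureBox_mem_boxProd (f x) (g x)
  next x s hx hs ih =>
    rw [show (⋂ i ∈ Finset.cons x s hx, pureBox (f i) (g i))
        = pureBox (f x) (g x) ∩ ⋂ i ∈ s, pureBox (f i) (g i) by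
      simp [Finset.cons_eq_insert, Set.iInter_iInter_eq_or_left]]
    exact inter_mem_boxProd (pureBox_mem_boxProd _ _) ih

end Aux
section Aux2
variable {A B : Type*} [Lattice A] [Lattice B]

lemma cross_facts {k : ℕ} (a : Fin (k + 1) → A) (b : Fin (k + 1) → B) (α : A) (β : B)
    (hc : (⋂ i, pureBox (a i) (b i)) ⊆ pureTens α β) :
    (IsBot (Finset.univ.inf' Finset.univ_nonempty a) ∨ ∃ t : B, IsTop t) ∧
    (IsBot (Finset.univ.inf' Finset.univ_nonempty b) ∨ ∃ s : A, IsTop s) := by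
  constructor
  · by_cases hb : IsBot (Finset.univ.inf' Finset.univ_nonempty a)
    · exact Or.inl hb
    · refine Or.inr ⟨β, fun y => ?_⟩
      have hmem : (⟨Finset.univ.inf' Finset.univ_nonempty a, β ⊔ y⟩ : A × B) ∈
          ⋂ i, pureBox (a i) (b i) := by
        refine Set.mem_iInter.mpr fun i => Or.inl ?_
        exact Finset.inf'_le a (Finset.mem_univ i)
      rcases mem_pureTens.mp (hc hmem) with ⟨_, h2⟩ | h | h
      · exact le_sup_right.trans h2
      · exact absurd h hb
      · exact le_sup_right.trans (h β)
  · by_cases hb : IsBot (Finset.univ.inf' Finset.univ_nonempty b)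
    · exact Or.inl hb
    · refine Or.inr ⟨α, fun x => ?_⟩
      have hmem : (⟨α ⊔ x, Finset.univ.inf' Finset.univ_nonempty b⟩ : A × B) ∈
          ⋂ i, pureBox (a i) (b i) := by
        refine Set.mem_iInter.mpr fun i => Or.inr ?_
        exact Finset.inf'_le b (Finset.mem_univ i)
      rcases mem_pureTens.mp (hc hmem) with ⟨h1, _⟩ | h | h
      · exact le_sup_right.trans h1
      · exact le_sup_right.trans (h α)
      · exact absurd h hb

lemma clause_data {k : ℕ} (a : Fin (k + 1) → A) (b : Fin (k + 1) → B)
    (f1 : IsBot (Finset.univ.inf' Finset.univ_nonempty a) ∨ ∃ t : B, IsTop t)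
    (f2 : IsBot (Finset.univ.inf' Finset.univ_nonempty b) ∨ ∃ s : A, IsTop s) :
    ∃ (s : Finset (Fin (k + 1)) → A) (t : Finset (Fin (k + 1)) → B),
      (∀ p ∈ ⋂ i, pureBox (a i) (b i),
        (∃ T, p.1 ≤ s T ∧ p.2 ≤ t T) ∨ IsBot p.1 ∨ IsBot p.2) ∧
      (∀ u v, (⋂ i, pureBox (a i) (b i)) ⊆ pureBox u v → ∀ T, s T ≤ u ∨ t T ≤ v) ∧
      (IsBot (t ∅) ∨ IsTop (s ∅)) ∧
      (IsBot (s Finset.univ) ∨ IsTop (t Finset.univ)) := by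
  classical
  set sE : A := if h : ∃ s : A, IsTop s then h.choose else a 0 with hsE
  set tE : B := if h : ∃ t : B, IsTop t then h.choose else b 0 with htE
  refine ⟨fun T => if h : T.Nonempty then T.inf' h a else sE,
          fun T => if h : Tᶜ.Nonempty then Tᶜ.inf' h b else tE, ?_, ?_, ?_, ?_⟩
  · -- cover
    intro p hp
    have hp' : ∀ i, p.1 ≤ a i ∨ p.2 ≤ b i := fun i => Set.mem_iInter.mp hp i
    set T₀ : Finset (Fin (k + 1)) := Finset.univ.filter (fun i => p.1 ≤ a i) with hT₀
    by_cases h1 : T₀.Nonempty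
    · by_cases h2 : T₀ᶜ.Nonempty
      · refine Or.inl ⟨T₀, ?_, ?_⟩
        · beta_reduce; rw [dif_pos h1]
          exact Finset.le_inf' h1 a fun i hi => (Finset.mem_filter.mp hi).2
        · beta_reduce; rw [dif_pos h2]
          refine Finset.le_inf' h2 b fun i hi => ?_
          have : ¬ p.1 ≤ a i := by
            have := Finset.mem_compl.mp hi
            simpa [hT₀] using this
          exact (hp' i).resolve_left this
      · -- T₀ᶜ empty : p.1 ≤ a i for all i
        have hall : ∀ i, p.1 ≤ a i := by
          intro i
          by_contra hcon
          exact h2 ⟨i, Finset.mem_compl.mpr (by simpa [hT₀] using hcon)⟩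
        rcases f1 with hb | ⟨t, ht⟩
        · refine Or.inr (Or.inl ?_)
          intro z
          exact le_trans (Finset.le_inf' Finset.univ_nonempty a fun i _ => hall i) (hb z)
        · refine Or.inl ⟨T₀, ?_, ?_⟩
          · beta_reduce; rw [dif_pos h1]
            exact Finset.le_inf' h1 a fun i hi => (Finset.mem_filter.mp hi).2
          · beta_reduce; rw [dif_neg h2, htE, dif_pos ⟨t, ht⟩]
            exact (⟨t, ht⟩ : ∃ t : B, IsTop t).choose_spec p.2
    · -- T₀ empty : p.2 ≤ b i for all i
      have hall : ∀ i, p.2 ≤ b i := by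
        intro i
        refine (hp' i).resolve_left fun hcon => h1 ⟨i, ?_⟩
        simp [hT₀, hcon]
      rcases f2 with hb | ⟨s, hs⟩
      · refine Or.inr (Or.inr ?_)
        intro z
        exact le_trans (Finset.le_inf' Finset.univ_nonempty b fun i _ => hall i) (hb z)
      · have h2 : (T₀ᶜ).Nonempty := by
          refine ⟨0, Finset.mem_compl.mpr fun hc => h1 ⟨0, hc⟩⟩
        refine Or.inl ⟨T₀, ?_, ?_⟩
        · beta_reduce; rw [dif_neg h1, hsE, dif_pos ⟨s, hs⟩]
          exact (⟨s, hs⟩ : ∃ s : A, IsTop s).choose_spec p.1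
        · beta_reduce; rw [dif_pos h2]
          exact Finset.le_inf' h2 b fun i _ => hall i
  · -- sound
    intro u v hsub T
    by_cases h1 : T.Nonempty
    · by_cases h2 : Tᶜ.Nonempty
      · have hq : (⟨T.inf' h1 a, Tᶜ.inf' h2 b⟩ : A × B) ∈ ⋂ i, pureBox (a i) (b i) := by
          refine Set.mem_iInter.mpr fun i => ?_
          by_cases hi : i ∈ T
          · exact Or.inl (Finset.inf'_le a hi)
          · exact Or.inr (Finset.inf'_le b (Finset.mem_compl.mpr hi))
        rcases hsub hq with h | h
        · exact Or.inl (by beta_reduce; rw [dif_pos h1]; exact h)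
        · exact Or.inr (by beta_reduce; rw [dif_pos h2]; exact h)
      · -- T = univ
        by_cases hu : T.inf' h1 a ≤ u
        · exact Or.inl (by beta_reduce; rw [dif_pos h1]; exact hu)
        · refine Or.inr ?_
          beta_reduce; rw [dif_neg h2]
          have htop : IsTop v := by
            intro y
            have hq : (⟨T.inf' h1 a, y⟩ : A × B) ∈ ⋂ i, pureBox (a i) (b i) := by
              refine Set.mem_iInter.mpr fun i => Or.inl (Finset.inf'_le a ?_)
              by_contra hc
              exact h2 ⟨i, Finset.mem_compl.mpr hc⟩
            exact (hsub hq).resolve_left hu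
          exact htop tE
    · -- T = ∅
      have h2 : Tᶜ.Nonempty := ⟨0, Finset.mem_compl.mpr fun hc => h1 ⟨0, hc⟩⟩
      by_cases hv : Tᶜ.inf' h2 b ≤ v
      · exact Or.inr (by beta_reduce; rw [dif_pos h2]; exact hv)
      · refine Or.inl ?_
        beta_reduce; rw [dif_neg h1]
        have htop : IsTop u := by
          intro x
          have hq : (⟨x, Tᶜ.inf' h2 b⟩ : A × B) ∈ ⋂ i, pureBox (a i) (b i) := by
            refine Set.mem_iInter.mpr fun i => Or.inr (Finset.inf'_le b ?_)
            exact Finset.mem_compl.mpr fun hc => h1 ⟨i, hc⟩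
          exact (hsub hq).resolve_right hv
        exact htop sE
  · -- edge at ∅
    have h2 : ((∅ : Finset (Fin (k + 1)))ᶜ).Nonempty := by
      simp [Finset.compl_empty]
    rcases f2 with hb | ⟨s, hs⟩
    · refine Or.inl ?_
      beta_reduce; rw [dif_pos h2]
      intro z
      refine le_trans (Finset.le_inf' _ b fun i _ => Finset.inf'_le b ?_) (hb z)
      simp [Finset.compl_empty]
    · refine Or.inr ?_
      beta_reduce; rw [dif_neg (by simp : ¬ (∅ : Finset (Fin (k+1))).Nonempty), hsE, dif_pos ⟨s, hs⟩]
      intro z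
      have := (⟨s, hs⟩ : ∃ s : A, IsTop s).choose_spec
      exact this z
  · -- edge at univ
    rcases f1 with hb | ⟨t, ht⟩
    · refine Or.inl ?_
      beta_reduce; rw [dif_pos Finset.univ_nonempty]
      exact hb
    · refine Or.inr ?_
      beta_reduce; rw [dif_neg (by simp : ¬ ((Finset.univ : Finset (Fin (k+1)))ᶜ).Nonempty), htE,
        dif_pos ⟨t, ht⟩]
      intro z
      exact (⟨t, ht⟩ : ∃ t : B, IsTop t).choose_spec z

end Aux2
section Aux3
variable {A B : Type*} [Lattice A] [Lattice B]

lemma core_boxCl {C : Type} [Fintype C] [DecidableEq C] (S : C → A) (Tt : C → B)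
    (Y : Set (A × B))
    (cover : ∀ p ∈ Y, (∃ c, p.1 ≤ S c ∧ p.2 ≤ Tt c) ∨ IsBot p.1 ∨ IsBot p.2)
    (sound : ∀ u v, Y ⊆ pureBox u v → ∀ c, S c ≤ u ∨ Tt c ≤ v)
    (c₀ c₁ : C) (hcc : c₀ ≠ c₁)
    (e0 : IsBot (Tt c₀) ∨ IsTop (S c₀))
    (e1 : IsBot (S c₁) ∨ IsTop (Tt c₁)) :
    BoxCl Y ∈ BoxProd A B := by
  classical
  set L : (C → Bool) → Finset C := fun χ => Finset.univ.filter (fun c => χ c = true) with hL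
  set R : (C → Bool) → Finset C := fun χ => Finset.univ.filter (fun c => χ c = false) with hR
  set U : (C → Bool) → A := fun χ => if h : (L χ).Nonempty then (L χ).sup' h S else S c₀
    with hU
  set V : (C → Bool) → B := fun χ => if h : (R χ).Nonempty then (R χ).sup' h Tt else Tt c₀
    with hV
  set X : Finset (C → Bool) :=
    Finset.univ.filter (fun χ => (L χ).Nonempty ∧ (R χ).Nonempty) with hX
  have memL : ∀ χ c, c ∈ L χ ↔ χ c = true := by
    intro χ c; simp [hL]
  have memR : ∀ χ c, c ∈ R χ ↔ χ c = false := by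
    intro χ c; simp [hR]
  have memX : ∀ χ, χ ∈ X ↔ (L χ).Nonempty ∧ (R χ).Nonempty := by
    intro χ; simp [hX]
  -- every box from X contains Y
  have step1 : ∀ χ ∈ X, Y ⊆ pureBox (U χ) (V χ) := by
    intro χ hχ p hp
    obtain ⟨hLne, hRne⟩ := (memX χ).mp hχ
    have hUeq : U χ = (L χ).sup' hLne S := by rw [hU]; beta_reduce; rw [dif_pos hLne]
    have hVeq : V χ = (R χ).sup' hRne Tt := by rw [hV]; beta_reduce; rw [dif_pos hRne]
    rcases cover p hp with ⟨c, h1, h2⟩ | hb | hb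
    · by_cases hc : χ c = true
      · refine Or.inl ?_
        rw [hUeq]
        exact h1.trans (Finset.le_sup' S ((memL χ c).mpr hc))
      · refine Or.inr ?_
        rw [hVeq]
        exact h2.trans (Finset.le_sup' Tt ((memR χ c).mpr (by simpa using hc)))
    · exact Or.inl (hb (U χ))
    · exact Or.inr (hb (V χ))
  -- a canonical element of X
  have hχ' : (fun c => decide (c ≠ c₀)) ∈ X := by
    refine (memX _).mpr ⟨⟨c₁, (memL _ c₁).mpr (by simp [hcc.symm])⟩,
      ⟨c₀, (memR _ c₀).mpr (by simp)⟩⟩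
  have hXne : X.Nonempty := ⟨_, hχ'⟩
  -- the main equality
  have heq : BoxCl Y = ⋂ χ ∈ X, pureBox (U χ) (V χ) := by
    apply Set.Subset.antisymm
    · refine Set.subset_iInter₂ fun χ hχ => boxCl_subset_pureBox (step1 χ hχ)
    · intro p hp
      have hp' : ∀ χ ∈ X, p ∈ pureBox (U χ) (V χ) := by
        intro χ hχ
        exact Set.mem_iInter₂.mp hp χ hχ
      refine mem_boxCl.mpr fun u v hsub => ?_
      have snd := sound u v hsub
      by_cases hall : ∀ c, S c ≤ u
      · -- all clauses hold on the left
        rcases e0 with hb | ht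
        · -- flip c₀ to the right
          have hm := hp' _ hχ'
          have hLne : (L (fun c => decide (c ≠ c₀))).Nonempty :=
            ((memX _).mp hχ').1
          have hRne : (R (fun c => decide (c ≠ c₀))).Nonempty :=
            ((memX _).mp hχ').2
          have hUeq : U (fun c => decide (c ≠ c₀)) = (L _).sup' hLne S := by
            rw [hU]; beta_reduce; rw [dif_pos hLne]
          have hVeq : V (fun c => decide (c ≠ c₀)) = (R _).sup' hRne Tt := by
            rw [hV]; beta_reduce; rw [dif_pos hRne]
          rcases hm with hm | hm
          · refine Or.inl (hm.trans ?_)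
            rw [hUeq]
            exact Finset.sup'_le _ _ fun c _ => hall c
          · refine Or.inr (hm.trans ?_)
            rw [hVeq]
            refine Finset.sup'_le _ _ fun c hc => ?_
            have : c = c₀ := by simpa using (memR _ c).mp hc
            rw [this]
            exact hb v
        · exact Or.inl ((ht p.1).trans (hall c₀))
      · push_neg at hall
        obtain ⟨cbad, hcbad⟩ := hall
        by_cases hsome : ∃ c, S c ≤ u
        · obtain ⟨cgood, hcgood⟩ := hsome
          set χ : C → Bool := fun c => decide (S c ≤ u) with hχdef
          have hLne : (L χ).Nonempty := ⟨cgood, (memL χ cgood).mpr (by simp [hχdef, hcgood])⟩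
          have hRne : (R χ).Nonempty := ⟨cbad, (memR χ cbad).mpr (by simp [hχdef, hcbad])⟩
          have hm := hp' χ ((memX χ).mpr ⟨hLne, hRne⟩)
          have hUeq : U χ = (L χ).sup' hLne S := by rw [hU]; beta_reduce; rw [dif_pos hLne]
          have hVeq : V χ = (R χ).sup' hRne Tt := by rw [hV]; beta_reduce; rw [dif_pos hRne]
          rcases hm with hm | hm
          · refine Or.inl (hm.trans ?_)
            rw [hUeq]
            refine Finset.sup'_le _ _ fun c hc => ?_
            have := (memL χ c).mp hc
            simpa [hχdef] using this
          · refine Or.inr (hm.trans ?_)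
            rw [hVeq]
            refine Finset.sup'_le _ _ fun c hc => ?_
            have hcu : ¬ S c ≤ u := by simpa [hχdef] using (memR χ c).mp hc
            exact (snd c).resolve_left hcu
        · -- no clause holds on the left
          push_neg at hsome
          rcases e1 with hb | ht
          · exact absurd (hb u) (hsome c₁)
          · exact Or.inr ((ht p.2).trans ((snd c₁).resolve_left (hsome c₁)))
  rw [heq]
  exact finsetInter_mem_boxProd X hXne U V

end Aux3
section Aux4
variable {A B : Type*} [Lattice A] [Lattice B]

lemma pureTens_mono {e e' : A} {f f' : B} (he : e ≤ e') (hf : f ≤ f') :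
    pureTens e f ⊆ pureTens e' f' := by
  intro p hp
  rcases mem_pureTens.mp hp with ⟨h1, h2⟩ | hb
  · exact mem_pureTens.mpr (Or.inl ⟨h1.trans he, h2.trans hf⟩)
  · exact mem_pureTens.mpr (Or.inr hb)

/-- When both lattices have bottoms, a pure tensor is the intersection of two boxes. -/
lemma pureTens_eq_boxes {zA : A} {zB : B} (hzA : IsBot zA) (hzB : IsBot zB) (e : A) (f : B) :
    pureTens e f = pureBox e zB ∩ pureBox zA f := by
  ext p
  simp only [Set.mem_inter_iff, mem_pureBox]
  constructor
  · intro hp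
    rcases mem_pureTens.mp hp with ⟨h1, h2⟩ | hb | hb
    · exact ⟨Or.inl h1, Or.inr h2⟩
    · exact ⟨Or.inl (hb e), Or.inl (hb zA)⟩
    · exact ⟨Or.inr (hb zB), Or.inr (hb f)⟩
  · rintro ⟨h1 | h1, h2 | h2⟩
    · refine mem_pureTens.mpr (Or.inr (Or.inl fun z => ?_))
      exact h2.trans (hzA z)
    · exact mem_pureTens.mpr (Or.inl ⟨h1, h2⟩)
    · refine mem_pureTens.mpr (Or.inr (Or.inr fun z => h1.trans (hzB z)))
    · refine mem_pureTens.mpr (Or.inr (Or.inr fun z => h1.trans (hzB z)))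

lemma pureTens_closure
    (g1 : (∃ z : A, IsBot z) ∨ (∃ t : B, IsTop t))
    (g2 : (∃ z : B, IsBot z) ∨ (∃ t : A, IsTop t))
    (e : A) (f : B) :
    ∃ e' f', pureTens e f ⊆ pureTens e' f' ∧
      ∀ Y : Set (A × B), Y ⊆ pureTens e' f' → BoxCl Y ⊆ pureTens e' f' := by
  classical
  by_cases hA : ∃ z : A, IsBot z
  · by_cases hB : ∃ z : B, IsBot z
    · obtain ⟨zA, hzA⟩ := hA
      obtain ⟨zB, hzB⟩ := hB
      refine ⟨e, f, subset_rfl, fun Y hY => ?_⟩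
      rw [pureTens_eq_boxes hzA hzB] at *
      exact Set.subset_inter
        (boxCl_subset_pureBox (hY.trans Set.inter_subset_left))
        (boxCl_subset_pureBox (hY.trans Set.inter_subset_right))
    · -- A has a bottom, B has no bottom; from g2, A has a top
      obtain ⟨zA, hzA⟩ := hA
      obtain ⟨tA, htA⟩ := g2.resolve_left hB
      have hbox : pureTens tA f = pureBox zA f := by
        ext p
        simp only [mem_pureBox]
        constructor
        · intro hp
          rcases mem_pureTens.mp hp with ⟨_, h2⟩ | hb | hb
          · exact Or.inr h2
          · exact Or.inl (hb zA)
          · exact absurd ⟨p.2, hb⟩ hB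
        · rintro (h | h)
          · exact mem_pureTens.mpr (Or.inr (Or.inl fun z => h.trans (hzA z)))
          · exact mem_pureTens.mpr (Or.inl ⟨htA p.1, h⟩)
      refine ⟨tA, f, pureTens_mono (htA e) le_rfl, fun Y hY => ?_⟩
      rw [hbox] at *
      exact boxCl_subset_pureBox hY
  · -- A has no bottom; from g1, B has a top
    obtain ⟨tB, htB⟩ := g1.resolve_left hA
    by_cases hB : ∃ z : B, IsBot z
    · obtain ⟨zB, hzB⟩ := hB
      have hbox : pureTens e tB = pureBox e zB := by
        ext p
        simp only [mem_pureBox]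
        constructor
        · intro hp
          rcases mem_pureTens.mp hp with ⟨h1, _⟩ | hb | hb
          · exact Or.inl h1
          · exact absurd ⟨p.1, hb⟩ hA
          · exact Or.inr (hb zB)
        · rintro (h | h)
          · exact mem_pureTens.mpr (Or.inl ⟨h, htB p.2⟩)
          · exact mem_pureTens.mpr (Or.inr (Or.inr fun z => h.trans (hzB z)))
      refine ⟨e, tB, pureTens_mono le_rfl (htB f), fun Y hY => ?_⟩
      rw [hbox] at *
      exact boxCl_subset_pureBox hY
    · -- no bottoms at all: from g2, A has a top as well, and the tensor is everything
      obtain ⟨tA, htA⟩ := g2.resolve_left hB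
      have huniv : pureTens tA tB = Set.univ := by
        ext p
        simp only [Set.mem_univ, iff_true]
        exact mem_pureTens.mpr (Or.inl ⟨htA p.1, htB p.2⟩)
      refine ⟨tA, tB, ?_, fun Y _ => ?_⟩
      · rw [huniv]; exact Set.subset_univ _
      · rw [huniv]; exact Set.subset_univ _

end Aux4
section Aux5
variable {A B : Type*} [Lattice A] [Lattice B]

lemma boxCl_union_mem {H K : Set (A × B)} (hH : H ∈ LatTens A B) (hK : K ∈ LatTens A B) :
    BoxCl (H ∪ K) ∈ LatTens A B := by
  classical
  obtain ⟨⟨n, a, b, rfl⟩, α, β, hHc⟩ := hH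
  obtain ⟨⟨m, c, d, rfl⟩, γ, δ, hKc⟩ := hK
  obtain ⟨fH1, fH2⟩ := cross_facts a b α β hHc
  obtain ⟨fK1, fK2⟩ := cross_facts c d γ δ hKc
  obtain ⟨sH, tH, coverH, soundH, e0, e1⟩ := clause_data a b fH1 fH2
  obtain ⟨sK, tK, coverK, soundK, -, -⟩ := clause_data c d fK1 fK2
  constructor
  · -- membership in the box product
    refine core_boxCl (Sum.elim sH sK) (Sum.elim tH tK) _ ?_ ?_
      (Sum.inl ∅) (Sum.inl Finset.univ) ?_ ?_ ?_
    · intro p hp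
      rcases (hp : _ ∨ _) with h | h
      · rcases coverH p h with ⟨T, h1, h2⟩ | hb
        · exact Or.inl ⟨Sum.inl T, h1, h2⟩
        · exact Or.inr hb
      · rcases coverK p h with ⟨T, h1, h2⟩ | hb
        · exact Or.inl ⟨Sum.inr T, h1, h2⟩
        · exact Or.inr hb
    · intro u v hsub cc
      obtain ⟨h1, h2⟩ := Set.union_subset_iff.mp hsub
      cases cc with
      | inl T => exact soundH u v h1 T
      | inr T => exact soundK u v h2 T
    · intro hcon
      have : (∅ : Finset (Fin (n + 1))) = Finset.univ := by
        exact Sum.inl.inj hcon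
      exact Finset.univ_nonempty.ne_empty this.symm
    · exact e0
    · exact e1
  · -- confinement
    have g1 : (∃ z : A, IsBot z) ∨ (∃ t : B, IsTop t) := fH1.imp (fun h => ⟨_, h⟩) id
    have g2 : (∃ z : B, IsBot z) ∨ (∃ t : A, IsTop t) := fH2.imp (fun h => ⟨_, h⟩) id
    obtain ⟨e', f', hsub', hcl⟩ := pureTens_closure g1 g2 (α ⊔ γ) (β ⊔ δ)
    have hsub : (⋂ i, pureBox (a i) (b i)) ∪ (⋂ i, pureBox (c i) (d i)) ⊆
        pureTens (α ⊔ γ) (β ⊔ δ) :=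
      Set.union_subset (hHc.trans (pureTens_mono le_sup_left le_sup_left))
        (hKc.trans (pureTens_mono le_sup_right le_sup_right))
    exact ⟨e', f', hcl _ (hsub.trans hsub')⟩

end Aux5
/-- If `A ⊠ B` is nonempty, then it is an ideal of the lattice `A □ B`;
in particular, it is a lattice under set inclusion. -/
theorem stmt_5 {A B : Type*} [Lattice A] [Lattice B]
    (hne : (LatTens A B).Nonempty) :
    (LatTens A B).Nonempty ∧
    (∀ H ∈ LatTens A B, ∀ K ∈ BoxProd A B, K ⊆ H → K ∈ LatTens A B) ∧
    (∀ H ∈ LatTens A B, ∀ K ∈ LatTens A B, BoxCl (H ∪ K) ∈ LatTens A B) ∧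
    (∀ H ∈ LatTens A B, ∀ K ∈ LatTens A B, H ∩ K ∈ LatTens A B) := by
  refine ⟨hne, ?_, ?_, ?_⟩
  · intro H hH K hK hsub
    obtain ⟨a, b, hc⟩ := hH.2
    exact ⟨hK, a, b, hsub.trans hc⟩
  · intro H hH K hK
    exact boxCl_union_mem hH hK
  · intro H hH K hK
    obtain ⟨a, b, hc⟩ := hH.2
    exact ⟨inter_mem_boxProd hH.1 hK.1, a, b, Set.inter_subset_left.trans hc⟩
end

section
/- Let A and B be lattices with least elements. Then the box product A^d □ B^d of the dual lattices, ordered by inclusion, is order-isomorphic to the dual of the lattice A ⊠ B; explicitly, the map Y ↦ Y^▽ is a bijection from A^d □ B^d onto A ⊠ B that reverses inclusion, and it sends each pure box ⋂_{i<n}(a_i □^d b_i) of A^d □ B^d to the join ⋁_{i<n}(a_i ⊠ b_i) computed in A ⊠ B. -/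
/-- The dual pure box `a □ᵈ b`, i.e. the pure box formed in `Aᵈ × Bᵈ`. -/
def pureBoxD {A B : Type*} [Lattice A] [Lattice B] (a : A) (b : B) : Set (A × B) :=
  {p : A × B | a ≤ p.1 ∨ b ≤ p.2}

/-- The box product `Aᵈ □ Bᵈ` of the dual lattices (as a family of subsets
of `A × B`): all finite nonempty intersections of dual pure boxes. -/
def BoxProdD (A B : Type*) [Lattice A] [Lattice B] : Set (Set (A × B)) :=
  {H | ∃ (n : ℕ) (a : Fin (n + 1) → A) (b : Fin (n + 1) → B),
    H = ⋂ i, pureBoxD (a i) (b i)}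

section Aux
variable {A B : Type*} [Lattice A] [Lattice B]

lemma trUp_anti {X X' : Set (A × B)} (h : X ⊆ X') : trUp X' ⊆ trUp X :=
  fun _ hq p hp => hq p (h hp)

lemma trDown_anti {X X' : Set (A × B)} (h : X ⊆ X') : trDown X' ⊆ trDown X :=
  fun _ hq p hp => hq p (h hp)

lemma subset_trDown_iff {X Y : Set (A × B)} : X ⊆ trDown Y ↔ Y ⊆ trUp X :=
  ⟨fun h q hq p hp => h hp q hq, fun h p hp q hq => h hq p hp⟩

lemma subset_trUp_trDown (Y : Set (A × B)) : Y ⊆ trUp (trDown Y) :=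
  subset_trDown_iff.mp (Set.Subset.refl _)

lemma subset_trDown_trUp (X : Set (A × B)) : X ⊆ trDown (trUp X) :=
  subset_trDown_iff.mpr (Set.Subset.refl _)

lemma trUp_trDown_trUp (X : Set (A × B)) : trUp (trDown (trUp X)) = trUp X :=
  subset_antisymm (trUp_anti (subset_trDown_trUp X)) (subset_trUp_trDown (trUp X))

lemma trUp_iUnion {ι : Sort*} (S : ι → Set (A × B)) :
    trUp (⋃ i, S i) = ⋂ i, trUp (S i) := by
  ext q
  simp only [trUp, Set.mem_iInter, Set.mem_setOf_eq, Set.mem_iUnion]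
  constructor
  · intro h i p hp; exact h p ⟨i, hp⟩
  · rintro h p ⟨i, hp⟩; exact h i p hp

lemma trUp_pureTens (a : A) (b : B) : trUp (pureTens a b) = pureBoxD a b := by
  ext q
  constructor
  · intro h; exact h (a, b) (Or.inl ⟨le_rfl, le_rfl⟩)
  · rintro h p (⟨h1, h2⟩ | hb | hb)
    · exact h.imp h1.trans h2.trans
    · exact Or.inl (hb q.1)
    · exact Or.inr (hb q.2)

lemma BoxCl_eq (X : Set (A × B)) : BoxCl X = trDown (trUp X) := by
  ext p
  simp only [BoxCl, Set.mem_iInter, trDown, trUp, Set.mem_setOf_eq, pureBox, Set.subset_def]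
  exact ⟨fun h q hq => h q.1 q.2 hq, fun h a b hab => h (a, b) hab⟩

lemma iInter_pureBoxD_eq_trUp (n : ℕ) (a : Fin (n + 1) → A) (b : Fin (n + 1) → B) :
    (⋂ i, pureBoxD (a i) (b i)) = trUp (⋃ i, pureTens (a i) (b i)) := by
  rw [trUp_iUnion]
  exact Set.iInter_congr fun i => (trUp_pureTens _ _).symm

lemma trUp_trDown_of_boxProdD {Y : Set (A × B)} (hY : Y ∈ BoxProdD A B) :
    trUp (trDown Y) = Y := by
  obtain ⟨n, a, b, rfl⟩ := hY
  rw [iInter_pureBoxD_eq_trUp, trUp_trDown_trUp]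

lemma trDown_trUp_of_latTens {X : Set (A × B)} (hX : X ∈ LatTens A B) :
    trDown (trUp X) = X := by
  obtain ⟨⟨n, a, b, rfl⟩, -⟩ := hX
  refine subset_antisymm (fun p hp => Set.mem_iInter.2 fun i => ?_) (subset_trDown_trUp _)
  exact hp (a i, b i) (fun r hr => Set.mem_iInter.1 hr i)

lemma mem_boxProd_iInter {ι : Type*} [Fintype ι] [Nonempty ι]
    (a : ι → A) (b : ι → B) : (⋂ i, pureBox (a i) (b i)) ∈ BoxProd A B := by
  obtain ⟨n, hn⟩ : ∃ n, Fintype.card ι = n + 1 :=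
    ⟨Fintype.card ι - 1, (Nat.succ_pred_eq_of_pos Fintype.card_pos).symm⟩
  let e : Fin (n + 1) ≃ ι := (Fintype.equivFinOfCardEq hn).symm
  refine ⟨n, a ∘ e, b ∘ e, ?_⟩
  exact (e.surjective.iInter_comp fun i => pureBox (a i) (b i)).symm

lemma mem_boxProdD_iInter {ι : Type*} [Fintype ι] [Nonempty ι]
    (a : ι → A) (b : ι → B) : (⋂ i, pureBoxD (a i) (b i)) ∈ BoxProdD A B := by
  obtain ⟨n, hn⟩ : ∃ n, Fintype.card ι = n + 1 :=
    ⟨Fintype.card ι - 1, (Nat.succ_pred_eq_of_pos Fintype.card_pos).symm⟩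
  let e : Fin (n + 1) ≃ ι := (Fintype.equivFinOfCardEq hn).symm
  refine ⟨n, a ∘ e, b ∘ e, ?_⟩
  exact (e.surjective.iInter_comp fun i => pureBoxD (a i) (b i)).symm

lemma trDown_iInter_boxD [OrderBot A] [OrderBot B]
    (n : ℕ) (a : Fin (n + 1) → A) (b : Fin (n + 1) → B) :
    trDown (⋂ i, pureBoxD (a i) (b i)) =
      ⋂ S : Finset (Fin (n + 1)),
        pureBox (S.sup a) (Sᶜ.sup b) := by
  classical
  ext p
  constructor
  · intro hp
    refine Set.mem_iInter.2 fun S => ?_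
    refine hp (_, _) (Set.mem_iInter.2 fun i => ?_)
    by_cases hg : i ∈ S
    · exact Or.inl (Finset.le_sup hg)
    · exact Or.inr (Finset.le_sup (Finset.mem_compl.2 hg))
  · intro hp q hq
    set S : Finset (Fin (n + 1)) := Finset.univ.filter (fun i => a i ≤ q.1) with hS
    have h1 : S.sup a ≤ q.1 :=
      Finset.sup_le fun i hi => (Finset.mem_filter.1 hi).2
    have h2 : Sᶜ.sup b ≤ q.2 := by
      refine Finset.sup_le fun i hi => ?_
      have hi' : ¬ a i ≤ q.1 := by
        intro hcon
        exact (Finset.mem_compl.1 hi) (Finset.mem_filter.2 ⟨Finset.mem_univ i, hcon⟩)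
      exact (Set.mem_iInter.1 hq i).resolve_left hi'
    exact (Set.mem_iInter.1 hp S).imp (fun h => h.trans h1) (fun h => h.trans h2)

lemma confined_trDown [OrderBot A] [OrderBot B]
    (n : ℕ) (a : Fin (n + 1) → A) (b : Fin (n + 1) → B) :
    Confined (trDown (⋂ i, pureBoxD (a i) (b i))) := by
  refine ⟨Finset.univ.sup a, Finset.univ.sup b, fun p hp => ?_⟩
  by_cases h1 : p.1 ≤ Finset.univ.sup a
  · by_cases h2 : p.2 ≤ Finset.univ.sup b
    · exact Or.inl ⟨h1, h2⟩
    · refine Or.inr (Or.inl fun x => ?_)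
      have := hp (x, Finset.univ.sup b)
        (Set.mem_iInter.2 fun i => Or.inr (Finset.le_sup (Finset.mem_univ i)))
      exact this.resolve_right h2
  · refine Or.inr (Or.inr fun y => ?_)
    have := hp (Finset.univ.sup a, y)
      (Set.mem_iInter.2 fun i => Or.inl (Finset.le_sup (Finset.mem_univ i)))
    exact this.resolve_left h1

lemma trUp_iInter_box (n : ℕ) (a : Fin (n + 1) → A) (b : Fin (n + 1) → B)
    (c : A) (d : B) (hconf : (⋂ i, pureBox (a i) (b i)) ⊆ pureTens c d) :
    trUp (⋂ i, pureBox (a i) (b i)) =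
      ⋂ S : Finset (Fin (n + 1)),
        pureBoxD (Finset.univ.inf' Finset.univ_nonempty
            (fun i => if i ∈ S then a i ⊓ c else c))
          (Finset.univ.inf' Finset.univ_nonempty
            (fun i => if i ∈ S then d else b i ⊓ d)) := by
  classical
  ext q
  constructor
  · intro hq
    refine Set.mem_iInter.2 fun S => ?_
    refine hq (_, _) (Set.mem_iInter.2 fun i => ?_)
    by_cases hg : i ∈ S
    · refine Or.inl ?_
      have := Finset.inf'_le (fun i => if i ∈ S then a i ⊓ c else c) (Finset.mem_univ i)
      simp only [hg, if_true] at this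
      exact this.trans inf_le_left
    · refine Or.inr ?_
      have := Finset.inf'_le (fun i => if i ∈ S then d else b i ⊓ d) (Finset.mem_univ i)
      simp only [hg, if_false] at this
      exact this.trans inf_le_left
  · intro hq p hp
    rcases hconf hp with ⟨hc, hd⟩ | hb | hb
    · set S : Finset (Fin (n + 1)) := Finset.univ.filter (fun i => p.1 ≤ a i) with hS
      have hmemS : ∀ i, i ∈ S ↔ p.1 ≤ a i := by
        intro i
        simp [hS]
      have h1 : p.1 ≤ Finset.univ.inf' Finset.univ_nonempty
          (fun i => if i ∈ S then a i ⊓ c else c) :=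
        Finset.le_inf' _ _ fun i _ => by
          by_cases hi : i ∈ S
          · simp only [hi, if_true]
            exact le_inf ((hmemS i).1 hi) hc
          · simp only [hi, if_false]
            exact hc
      have h2 : p.2 ≤ Finset.univ.inf' Finset.univ_nonempty
          (fun i => if i ∈ S then d else b i ⊓ d) :=
        Finset.le_inf' _ _ fun i _ => by
          by_cases hi : i ∈ S
          · simp only [hi, if_true]
            exact hd
          · simp only [hi, if_false]
            have := (Set.mem_iInter.1 hp i).resolve_left (fun h => hi ((hmemS i).2 h))
            exact le_inf this hd
      exact (Set.mem_iInter.1 hq S).imp h1.trans h2.trans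
    · exact Or.inl (hb q.1)
    · exact Or.inr (hb q.2)

lemma trUp_mem_boxProdD_of_latTens {X : Set (A × B)} (hX : X ∈ LatTens A B) :
    trUp X ∈ BoxProdD A B := by
  obtain ⟨⟨n, a, b, rfl⟩, c, d, hconf⟩ := hX
  rw [trUp_iInter_box n a b c d hconf]
  exact mem_boxProdD_iInter _ _

end Aux

/-- `Aᵈ □ Bᵈ` is isomorphic to the dual of `A ⊠ B` via `Y ↦ Y^▽`, which maps each
pure box `⋂ (a_i □ᵈ b_i)` to the join `⋁ (a_i ⊠ b_i)` computed in `A ⊠ B`. -/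
theorem stmt_11 {A B : Type*} [Lattice A] [OrderBot A] [Lattice B] [OrderBot B] :
    Set.BijOn trDown (BoxProdD A B) (LatTens A B) ∧
    (∀ Y₁ ∈ BoxProdD A B, ∀ Y₂ ∈ BoxProdD A B,
      Y₁ ⊆ Y₂ ↔ trDown Y₂ ⊆ trDown Y₁) ∧
    ∀ (n : ℕ) (a : Fin (n + 1) → A) (b : Fin (n + 1) → B),
      trDown (⋂ i, pureBoxD (a i) (b i)) = BoxCl (⋃ i, pureTens (a i) (b i)) := by
  refine ⟨⟨?_, ?_, ?_⟩, ?_, ?_⟩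
  · rintro Y ⟨n, a, b, rfl⟩
    refine ⟨?_, confined_trDown n a b⟩
    rw [trDown_iInter_boxD]
    exact mem_boxProd_iInter _ _
  · intro Y₁ h₁ Y₂ h₂ he
    rw [← trUp_trDown_of_boxProdD h₁, ← trUp_trDown_of_boxProdD h₂, he]
  · intro X hX
    exact ⟨trUp X, trUp_mem_boxProdD_of_latTens hX, trDown_trUp_of_latTens hX⟩
  · intro Y₁ h₁ Y₂ h₂
    refine ⟨trDown_anti, fun h => ?_⟩
    rw [← trUp_trDown_of_boxProdD h₁, ← trUp_trDown_of_boxProdD h₂]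
    exact trUp_anti h
  · intro n a b
    rw [BoxCl_eq, ← iInter_pureBoxD_eq_trUp]
end
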